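/- Let p ≥ 1, let μ be a probability vector on Fin p, let ρ > 0, and let σ : Fin p ≃ Fin p be a bijection (a deterministic guessing strategy, where σ(i) is the i-th guess). Define G(σ,u) for u in Fin p as the number of questions needed to guess u, i.e. G(σ,u) = i + 1 where σ(i) = u (positions counted from 1). Then Σ_u μ_u · (G(σ,u))^ρ ≥ (1 + log p)^{−ρ} · (Σ_u μ_u^{1/(1+ρ)})^{1+ρ}. -/

import Mathlib

/-- Lower bound on the ρ-moment of the guessing time for any
deterministic strategy `σ`:
`Σ_u μ_u·G(σ,u)^ρ ≥ (1 + log p)^{−ρ}·(Σ_u μ_u^{1/(1+ρ)})^{1+ρ}`,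
where `G(σ,u) = (σ⁻¹ u).val + 1`. -/
theorem guessing_lower_bound
    (p : ℕ) (hp : 0 < p)
    (μ : Fin p → ℝ)
    (hμnonneg : ∀ u, 0 ≤ μ u) (hμsum : ∑ u, μ u = 1)
    (ρ : ℝ) (hρ : 0 < ρ)
    (σ : Fin p ≃ Fin p) :
    ∑ u, μ u * (((σ.symm u : ℕ) : ℝ) + 1) ^ ρ
      ≥ (1 + Real.log p) ^ (-ρ) * (∑ u, μ u ^ (1 / (1 + ρ))) ^ (1 + ρ) := by
  set G : Fin p → ℝ := fun u => ((σ.symm u : ℕ) : ℝ) + 1 with hG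
  have hGpos : ∀ u, 0 < G u := fun u => by positivity
  set A : ℝ := ∑ u, μ u * G u ^ ρ with hA
  set B : ℝ := ∑ u, (G u)⁻¹ with hB
  set S : ℝ := ∑ u, μ u ^ (1 / (1 + ρ)) with hS
  have h1ρ : (0:ℝ) < 1 + ρ := by linarith
  have hAnn : 0 ≤ A := Finset.sum_nonneg fun u _ => by
    have := hμnonneg u; have := hGpos u; positivity
  have hSnn : 0 ≤ S := Finset.sum_nonneg fun u _ => by
    have := hμnonneg u; positivity
  have hconj : Real.HolderConjugate (1 + ρ) ((1 + ρ) / ρ) := by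
    refine Real.holderConjugate_iff.mpr ⟨?_, ?_⟩
    · linarith
    · field_simp
  -- B = harmonic sum ≤ 1 + log p
  have hBle : B ≤ 1 + Real.log p := by
    have h1 : B = ∑ i : Fin p, (((i : ℕ) : ℝ) + 1)⁻¹ :=
      Equiv.sum_comp σ.symm (fun i : Fin p => (((i : ℕ) : ℝ) + 1)⁻¹)
    have h2 : ∑ i : Fin p, (((i : ℕ) : ℝ) + 1)⁻¹ = (harmonic p : ℝ) := by
      rw [Fin.sum_univ_eq_sum_range (fun n : ℕ => (((n : ℝ)) + 1)⁻¹), harmonic]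
      push_cast
      rfl
    rw [h1, h2]
    exact harmonic_le_one_add_log p
  have hBnn : 0 ≤ B := Finset.sum_nonneg fun u _ => (inv_nonneg).2 (hGpos u).le
  have hlogp_pos : 0 < 1 + Real.log p := by
    have : 0 ≤ Real.log p := Real.log_natCast_nonneg p
    linarith
  -- Hölder
  have hHolder : S ≤ A ^ (1 / (1 + ρ)) * B ^ (ρ / (1 + ρ)) := by
    have key : ∀ u : Fin p,
        μ u ^ (1 / (1 + ρ)) =
          ((μ u * G u ^ ρ) ^ (1 / (1 + ρ))) * (((G u)⁻¹) ^ (1 / ((1 + ρ) / ρ))) := by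
      intro u
      have hGu := hGpos u
      have h3 : (1:ℝ) / ((1 + ρ) / ρ) = ρ / (1 + ρ) := by
        rw [one_div, inv_div]
      rw [h3, Real.mul_rpow (hμnonneg u) (by positivity),
        ← Real.rpow_mul hGu.le, Real.inv_rpow hGu.le, ← Real.rpow_neg hGu.le,
        mul_assoc, ← Real.rpow_add hGu]
      have : ρ * (1 / (1 + ρ)) + -(ρ / (1 + ρ)) = 0 := by field_simp; ring
      rw [this, Real.rpow_zero, mul_one]
    calc S = ∑ u, ((μ u * G u ^ ρ) ^ (1 / (1 + ρ))) * (((G u)⁻¹) ^ (1 / ((1 + ρ) / ρ))) := by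
            rw [hS]; exact Finset.sum_congr rfl fun u _ => key u
      _ ≤ (∑ u, ((μ u * G u ^ ρ) ^ (1 / (1 + ρ))) ^ (1 + ρ)) ^ (1 / (1 + ρ)) *
          (∑ u, (((G u)⁻¹) ^ (1 / ((1 + ρ) / ρ))) ^ ((1 + ρ) / ρ)) ^ (1 / ((1 + ρ) / ρ)) := by
          refine Real.inner_le_Lp_mul_Lq_of_nonneg Finset.univ hconj
            (fun u _ => ?_) (fun u _ => ?_)
          · have := hμnonneg u; have := hGpos u; positivity
          · have := hGpos u; positivity
      _ = A ^ (1 / (1 + ρ)) * B ^ (ρ / (1 + ρ)) := by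
          have e1 : ∀ u : Fin p, ((μ u * G u ^ ρ) ^ (1 / (1 + ρ))) ^ (1 + ρ) = μ u * G u ^ ρ := by
            intro u
            have := hμnonneg u; have hGu := hGpos u
            rw [← Real.rpow_mul (by positivity), one_div,
              inv_mul_cancel₀ h1ρ.ne', Real.rpow_one]
          have e2 : ∀ u : Fin p, (((G u)⁻¹) ^ (1 / ((1 + ρ) / ρ))) ^ ((1 + ρ) / ρ) = (G u)⁻¹ := by
            intro u
            have hGu := hGpos u
            rw [← Real.rpow_mul (by positivity), one_div,
              inv_mul_cancel₀ (by positivity : ((1 + ρ) / ρ) ≠ 0), Real.rpow_one]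
          have h3 : (1:ℝ) / ((1 + ρ) / ρ) = ρ / (1 + ρ) := by rw [one_div, inv_div]
          rw [Finset.sum_congr rfl fun u _ => e1 u, Finset.sum_congr rfl fun u _ => e2 u, h3,
            hA, hB]
  -- raise to power 1+ρ
  have hfinal : S ^ (1 + ρ) ≤ A * (1 + Real.log p) ^ ρ := by
    have h4 : S ^ (1 + ρ) ≤ (A ^ (1 / (1 + ρ)) * B ^ (ρ / (1 + ρ))) ^ (1 + ρ) :=
      Real.rpow_le_rpow hSnn hHolder h1ρ.le
    have h5 : (A ^ (1 / (1 + ρ)) * B ^ (ρ / (1 + ρ))) ^ (1 + ρ) = A * B ^ ρ := by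
      rw [Real.mul_rpow (by positivity) (by positivity),
        ← Real.rpow_mul hAnn, ← Real.rpow_mul hBnn, one_div,
        inv_mul_cancel₀ h1ρ.ne', div_mul_cancel₀ _ h1ρ.ne', Real.rpow_one]
    have h6 : B ^ ρ ≤ (1 + Real.log p) ^ ρ :=
      Real.rpow_le_rpow hBnn hBle hρ.le
    calc S ^ (1 + ρ) ≤ A * B ^ ρ := h5 ▸ h4
      _ ≤ A * (1 + Real.log p) ^ ρ := by
          exact mul_le_mul_of_nonneg_left h6 hAnn
  rw [ge_iff_le, Real.rpow_neg hlogp_pos.le, inv_mul_le_iff₀ (by positivity)]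
  calc S ^ (1 + ρ) ≤ A * (1 + Real.log p) ^ ρ := hfinal
    _ = (1 + Real.log p) ^ ρ * A := mul_comm _ _
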